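/- Define, for 3×3 nilpotent complex matrices N: det₁(N) = N_{2,1}N_{3,2} − N_{2,2}N_{3,1}, f₁(N) = N_{2,1}·det₁(N) + N_{3,1}·(N_{2,1}N_{3,3} − N_{3,1}N_{2,3}), and f₂(N) = N_{3,2}·det₁(N) + N_{3,1}·(N_{1,1}N_{3,2} − N_{1,2}N_{3,1}). Then f₁(N)·f₂(N) = det₁(N)³ for all nilpotent N ∈ ℂ^{3×3}. -/

import Mathlib

noncomputable def det1 (N : Matrix (Fin 3) (Fin 3) ℂ) : ℂ :=
  N 1 0 * N 2 1 - N 1 1 * N 2 0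

noncomputable def f1 (N : Matrix (Fin 3) (Fin 3) ℂ) : ℂ :=
  N 1 0 * det1 N + N 2 0 * (N 1 0 * N 2 2 - N 2 0 * N 1 2)

noncomputable def f2 (N : Matrix (Fin 3) (Fin 3) ℂ) : ℂ :=
  N 2 1 * det1 N + N 2 0 * (N 0 0 * N 2 1 - N 0 1 * N 2 0)

/-- the relation f₁·f₂ = det₁³ on the 3×3 nilpotent cone. -/
theorem stmt_10 (N : Matrix (Fin 3) (Fin 3) ℂ) (hN : N ^ 3 = 0) :
    f1 N * f2 N = (det1 N) ^ 3 := by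
  have hnil : IsNilpotent N := ⟨3, hN⟩
  have h1 : Matrix.trace N = 0 :=
    (Matrix.isNilpotent_trace_of_isNilpotent hnil).eq_zero
  have h2 : Matrix.trace (N * N) = 0 := by
    have : IsNilpotent (N * N) := by
      refine ⟨3, ?_⟩
      calc (N * N) ^ 3 = N ^ 3 * N ^ 3 := by rw [← sq, ← pow_mul, ← pow_add]
        _ = 0 := by rw [hN, mul_zero]
    exact (Matrix.isNilpotent_trace_of_isNilpotent this).eq_zero
  have h3 : N.det = 0 := by
    have : N.det ^ 3 = 0 := by rw [← Matrix.det_pow, hN]; exact Matrix.det_zero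
    exact pow_eq_zero_iff (by norm_num) |>.mp this
  rw [Matrix.trace_fin_three] at h1
  rw [Matrix.trace_fin_three] at h2
  simp only [Matrix.mul_apply, Fin.sum_univ_three] at h2
  rw [Matrix.det_fin_three] at h3
  simp only [f1, f2, det1]
  set a := N 0 0; set b := N 0 1; set c := N 0 2
  set d := N 1 0; set e := N 1 1; set f := N 1 2
  set g := N 2 0; set h := N 2 1; set i := N 2 2
  linear_combination
    (-(1/2)*e*g^3*i + (1/2)*e^2*g^3 + (1/2)*d*g^2*h*i - (3/2)*d*e*g^2*h
      + d^2*g*h^2 - (1/2)*a*e*g^3 + (1/2)*a*d*g^2*h) * h1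
    + ((1/2)*e*g^3 - (1/2)*d*g^2*h) * h2
    + g^3 * h3
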